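/- There exists a positive integer n₀ such that for all positive integers n ≥ n₀ and s ≤ n and every real p with 0 < p ≤ n^{−13/14}, the probability that the independence number of the random graph G(s,p) is at most A(s,n) = min(s/15, log² n) is at most n^{−3s}. -/

import Mathlib

open Filter MeasureTheory

namespace RandomCorr

/-- A correspondence assignment for a graph `G`: a list assignment `L` together with,
for each edge, a partial matching between the colors of its endpoints,
encoded as a symmetric relation `M` supported on edges of `G`. -/
structure CorrAssignment {V : Type} (G : SimpleGraph V) where
  L : V → Finset ℕ
  M : V → ℕ → V → ℕ → Prop
  symm : ∀ u i v j, M u i v j → M v j u i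
  adj_of : ∀ u i v j, M u i v j → G.Adj u v
  mem_left : ∀ u i v j, M u i v j → i ∈ L u
  mem_right : ∀ u i v j, M u i v j → j ∈ L v
  matching : ∀ u i v j j', M u i v j → M u i v j' → j = j'

variable {V : Type}

/-- An `(L,M)`-coloring. -/
def CorrAssignment.IsColoring {G : SimpleGraph V} (C : CorrAssignment G) (φ : V → ℕ) : Prop :=
  (∀ v, φ v ∈ C.L v) ∧ ∀ u v, ¬ C.M u (φ u) v (φ v)

/-- `(L,M)` is an `ℓ`-correspondence assignment. -/
def IsLAssignment {G : SimpleGraph V} (C : CorrAssignment G) (ℓ : ℕ) : Prop :=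
  ∀ v, ℓ ≤ (C.L v).card

/-- The correspondence chromatic number of `G` is at most `ℓ`. -/
def corrChromAtMost (G : SimpleGraph V) (ℓ : ℕ) : Prop :=
  ∀ C : CorrAssignment G, IsLAssignment C ℓ → ∃ φ, C.IsColoring φ

/-- Maximum degree of a finite graph. -/
noncomputable def maxDeg [Fintype V] (G : SimpleGraph V) : ℕ :=
  Finset.univ.sup fun v => (G.neighborSet v).ncard

/-- `binom(n, ≤ b) = ∑_{i=0}^{⌊b⌋} binom(n,i)`. -/
noncomputable def binomLe (n : ℕ) (b : ℝ) : ℕ :=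
  ∑ i ∈ Finset.range (⌊b⌋₊ + 1), n.choose i

/-- The number of independent sets (including the empty set) of a subgraph `F`. -/
noncomputable def subIndepCount {W : Type} {H : SimpleGraph W} (F : H.Subgraph) : ℕ :=
  {S : Set W | S ⊆ F.verts ∧ ∀ a ∈ S, ∀ b ∈ S, ¬ F.Adj a b}.ncard

/-- A neighborhood subgraph: a subgraph whose vertex set is contained in the
neighborhood of some vertex. -/
def IsNbrSubgraph {W : Type} {H : SimpleGraph W} (F : H.Subgraph) : Prop :=
  ∃ v, F.verts ⊆ H.neighborSet v

/-- `G` is `b`-IS-rich (with respect to maximum degree `Δ`): every `b`-large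
neighborhood subgraph `F` satisfies `I(F) ≥ 2 · binom(|V(F)|, ≤ b)`. -/
def ISRich (G : SimpleGraph V) (b : ℝ) (Δ : ℕ) : Prop :=
  ∀ F : G.Subgraph, IsNbrSubgraph F →
    (Δ : ℝ) ^ ((1 : ℝ)/3) < (binomLe F.verts.ncard b : ℝ) →
    2 * binomLe F.verts.ncard b ≤ subIndepCount F

/-- The cover graph of a correspondence assignment. -/
def coverGraph {G : SimpleGraph V} (C : CorrAssignment G) : SimpleGraph (V × ℕ) where
  Adj x y := C.M x.1 x.2 y.1 y.2
  symm := ⟨fun x y h => C.symm _ _ _ _ h⟩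
  loopless := ⟨fun x h => (G.loopless.irrefl x.1) (C.adj_of _ _ _ _ h)⟩

/-- A correspondence assignment is `b`-IS-rich (with respect to `Δ`) if every `b`-large
neighborhood subgraph of its cover graph has at least `2 · binom(|V(F)|, ≤ b)`
independent sets. -/
def CorrAssignment.ISRich {G : SimpleGraph V} (C : CorrAssignment G) (b : ℝ) (Δ : ℕ) : Prop :=
  ∀ F : (coverGraph C).Subgraph, IsNbrSubgraph F →
    (Δ : ℝ) ^ ((1 : ℝ)/3) < (binomLe F.verts.ncard b : ℝ) →
    2 * binomLe F.verts.ncard b ≤ subIndepCount F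

/-- Bernoulli measure on `Bool` with success probability `p` (truncated to `[0,1]`). -/
noncomputable def bern (p : ℝ) : Measure Bool :=
  (PMF.ofFintype (fun b => cond b (min (ENNReal.ofReal p) 1) (1 - min (ENNReal.ofReal p) 1))
    (by simp [add_tsub_cancel_of_le (min_le_right (ENNReal.ofReal p) 1)])).toMeasure

/-- The Erdős–Rényi measure: each potential edge appears independently with
probability `p`. -/
noncomputable def erdosRenyi (n : ℕ) (p : ℝ) : Measure (Sym2 (Fin n) → Bool) :=
  Measure.pi fun _ => bern p

/-- The graph determined by an edge-indicator function. -/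
def graphOf {n : ℕ} (ω : Sym2 (Fin n) → Bool) : SimpleGraph (Fin n) where
  Adj u v := u ≠ v ∧ ω s(u, v) = true
  symm := by
    constructor
    intro u v h
    refine ⟨h.1.symm, ?_⟩
    rw [Sym2.eq_swap]
    exact h.2
  loopless := ⟨fun u h => h.1 rfl⟩

/-- `G` has a complete minor of order `k`. -/
def HasCompleteMinor (G : SimpleGraph V) (k : ℕ) : Prop :=
  ∃ B : Fin k → Set V,
    (∀ i, (B i).Nonempty) ∧
    (∀ i, (G.induce (B i)).Connected) ∧
    (∀ i j, i ≠ j → Disjoint (B i) (B j)) ∧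
    (∀ i j, i ≠ j → ∃ u ∈ B i, ∃ v ∈ B j, G.Adj u v)

/-- The Hadwiger number: the largest `k` such that `K_k` is a minor of `G`. -/
noncomputable def hadwigerNumber [Fintype V] (G : SimpleGraph V) : ℕ :=
  sSup {k | HasCompleteMinor G k}

/-- Independence number. -/
noncomputable def indepNum [Fintype V] (G : SimpleGraph V) : ℕ :=
  sSup {k | ∃ S : Finset V, S.card = k ∧ ∀ a ∈ S, ∀ b ∈ S, ¬ G.Adj a b}

/-- A partial `(L,M)`-coloring. -/
def IsPartialColoring {G : SimpleGraph V} (C : CorrAssignment G) (φ : V → Option ℕ) : Prop :=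
  (∀ v c, φ v = some c → c ∈ C.L v) ∧
  ∀ u v cu cv, φ u = some cu → φ v = some cv → ¬ C.M u cu v cv

/-- The number of colors available at `u` with respect to a partial coloring `φ`. -/
noncomputable def availCount {G : SimpleGraph V} (C : CorrAssignment G)
    (φ : V → Option ℕ) (u : V) : ℕ :=
  {c : ℕ | c ∈ C.L u ∧ ∀ v cv, φ v = some cv → ¬ C.M u c v cv}.ncard

/-- The event `A_u`: `u` is uncolored and fewer than `Δ^{7/12}` colors are available
at `u`. -/
def EventA {G : SimpleGraph V} (C : CorrAssignment G) (Δ : ℕ) (u : V)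
    (φ : V → Option ℕ) : Prop :=
  φ u = none ∧ (availCount C φ u : ℝ) < (Δ : ℝ) ^ ((7 : ℝ)/12)

/-- The number of independent sets of `F` of size at least `m`. -/
noncomputable def indepGeCount {W : Type} {H : SimpleGraph W} (F : H.Subgraph) (m : ℕ) : ℕ :=
  {S : Set W | S ⊆ F.verts ∧ (∀ a ∈ S, ∀ b ∈ S, ¬ F.Adj a b) ∧ m ≤ S.ncard}.ncard

/-- The median size `ᾱ(F)` of an independent set: the largest `m` such that at least
half of the independent sets of `F` have size at least `m`. -/
noncomputable def medianIndep {W : Type} {H : SimpleGraph W} (F : H.Subgraph) : ℕ :=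
  sSup {m : ℕ | subIndepCount F ≤ 2 * indepGeCount F m}

end RandomCorr

section AuxLemmas

open Finset

/-- Peeling lemma (Turán-type bound): if every independent set of `G` has size at most
`k`, then for every vertex subset `W`, `|W|² ≤ k (2 e(W) + |W|)`. -/
lemma RandomCorr.peel {s : ℕ} (G : SimpleGraph (Fin s)) [DecidableRel G.Adj] (k : ℕ)
    (h : ∀ S : Finset (Fin s), (∀ a ∈ S, ∀ b ∈ S, ¬ G.Adj a b) → S.card ≤ k)
    (W : Finset (Fin s)) :
    W.card * W.card ≤
      k * (2 * (G.edgeFinset.filter (fun e => ∀ x ∈ e, x ∈ W)).card + W.card) := by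
  classical
  induction W using Finset.strongInductionOn with
  | _ W ih =>
  rcases W.eq_empty_or_nonempty with rfl | hW
  · simp
  obtain ⟨v₀, hv₀⟩ := hW
  set F := W.powerset.filter (fun S => ∀ a ∈ S, ∀ b ∈ S, ¬ G.Adj a b) with hF
  have hFne : F.Nonempty := ⟨∅, by simp [hF]⟩
  obtain ⟨S, hSF, hSmax⟩ := F.exists_max_image Finset.card hFne
  rw [hF, mem_filter, mem_powerset] at hSF
  obtain ⟨hSW, hSind⟩ := hSF
  have hS1 : 1 ≤ S.card := by
    have hmem : ({v₀} : Finset (Fin s)) ∈ F := by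
      simp only [hF, mem_filter, mem_powerset]
      refine ⟨singleton_subset_iff.2 hv₀, ?_⟩
      intro a ha b hb
      simp only [mem_singleton] at ha hb
      subst ha; subst hb; exact G.loopless.irrefl _
    simpa using hSmax _ hmem
  have hSk : S.card ≤ k := h S hSind
  have hnb : ∀ v ∈ W \ S, ∃ u, u ∈ S ∧ G.Adj v u := by
    intro v hv
    rw [Finset.mem_sdiff] at hv
    by_contra hcon
    push_neg at hcon
    have hins : insert v S ∈ F := by
      simp only [hF, mem_filter, mem_powerset]
      refine ⟨insert_subset hv.1 hSW, ?_⟩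
      intro a ha b hb hadj
      rcases mem_insert.1 ha with rfl | ha'
      · rcases mem_insert.1 hb with rfl | hb'
        · exact G.loopless.irrefl _ hadj
        · exact hcon b hb' hadj
      · rcases mem_insert.1 hb with rfl | hb'
        · exact hcon a ha' hadj.symm
        · exact hSind a ha' b hb' hadj
    have hle := hSmax _ hins
    rw [card_insert_of_notMem hv.2] at hle
    omega
  let u : Fin s → Fin s := fun v => if hv : ∃ u, u ∈ S ∧ G.Adj v u then hv.choose else v
  have hu : ∀ v ∈ W \ S, u v ∈ S ∧ G.Adj v (u v) := by
    intro v hv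
    have hex := hnb v hv
    simp only [u, dif_pos hex]
    exact hex.choose_spec
  set EW := G.edgeFinset.filter (fun e => ∀ x ∈ e, x ∈ W) with hEW
  set E' := G.edgeFinset.filter (fun e => ∀ x ∈ e, x ∈ W \ S) with hE'
  set A := (W \ S).image (fun v => s(v, u v)) with hA
  have hcardA : A.card = (W \ S).card := by
    rw [hA]
    apply card_image_of_injOn
    intro v hv v' hv' heq
    rcases Sym2.eq_iff.1 heq with ⟨h1, _⟩ | ⟨h1, h2⟩
    · exact h1
    · exfalso
      have hmem := (hu v' hv').1
      rw [← h1] at hmem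
      exact (Finset.mem_sdiff.1 hv).2 hmem
  have hAEW : A ⊆ EW := by
    intro e he
    rw [hA, mem_image] at he
    obtain ⟨v, hv, rfl⟩ := he
    obtain ⟨huS, hadj⟩ := hu v hv
    rw [hEW, mem_filter]
    refine ⟨SimpleGraph.mem_edgeFinset.2 hadj, ?_⟩
    intro x hx
    rcases Sym2.mem_iff.1 hx with rfl | rfl
    · exact (Finset.mem_sdiff.1 hv).1
    · exact hSW huS
  have hE'EW : E' ⊆ EW := by
    intro e he
    rw [hE', mem_filter] at he
    rw [hEW, mem_filter]
    exact ⟨he.1, fun x hx => (Finset.mem_sdiff.1 (he.2 x hx)).1⟩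
  have hdisj : Disjoint A E' := by
    rw [Finset.disjoint_left]
    intro e heA heE'
    rw [hA, mem_image] at heA
    obtain ⟨v, hv, rfl⟩ := heA
    rw [hE', mem_filter] at heE'
    have hmem := heE'.2 (u v) (Sym2.mem_mk_right _ _)
    exact (Finset.mem_sdiff.1 hmem).2 (hu v hv).1
  have hcount : E'.card + (W \ S).card ≤ EW.card := by
    have hle := card_le_card (union_subset hE'EW hAEW)
    rwa [card_union_of_disjoint hdisj.symm, hcardA] at hle
  have hIH := ih (W \ S) (sdiff_ssubset hSW (card_pos.1 hS1))
  have hjw : S.card ≤ W.card := card_le_card hSW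
  have hws : (W \ S).card = W.card - S.card := card_sdiff_of_subset hSW
  set w := W.card
  set j := S.card
  set b := w - j with hb
  have hwb : w = b + j := by omega
  rw [hws] at hIH hcount
  rw [← hE'] at hIH
  rw [hwb]
  have e1 : j * (2 * b) ≤ k * (2 * b) := Nat.mul_le_mul_right _ hSk
  have e2 : j * j ≤ k * j := Nat.mul_le_mul_right _ hSk
  have e3 : k * (E'.card + b) ≤ k * EW.card := Nat.mul_le_mul_left _ hcount
  nlinarith [hIH, e1, e2, e3]

/-- The indepence-number set is bounded above. -/
lemma RandomCorr.indepSet_bddAbove {s : ℕ} (G : SimpleGraph (Fin s)) :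
    BddAbove {k | ∃ S : Finset (Fin s), S.card = k ∧ ∀ a ∈ S, ∀ b ∈ S, ¬ G.Adj a b} := by
  refine ⟨s, fun x hx => ?_⟩
  obtain ⟨S, rfl, -⟩ := hx
  simpa using S.card_le_univ

/-- Measure of a cylinder event in the Erdős–Rényi measure. -/
lemma RandomCorr.cyl_measure {s : ℕ} {p : ℝ} (hp0 : 0 ≤ p) (hp1 : p ≤ 1)
    (E₀ : Finset (Sym2 (Fin s))) :
    RandomCorr.erdosRenyi s p {ω | ∀ e ∈ E₀, ω e = true}
      = ENNReal.ofReal p ^ E₀.card := by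
  classical
  haveI : IsProbabilityMeasure (RandomCorr.bern p) :=
    PMF.toMeasure.isProbabilityMeasure _
  have hbt : RandomCorr.bern p {true} = ENNReal.ofReal p := by
    rw [RandomCorr.bern, PMF.toMeasure_apply_singleton _ _ (measurableSet_singleton _)]
    have hmin : min (ENNReal.ofReal p) 1 = ENNReal.ofReal p :=
      min_eq_left (ENNReal.ofReal_le_one.2 hp1)
    simp [PMF.ofFintype_apply, hmin]
  have hset : {ω : Sym2 (Fin s) → Bool | ∀ e ∈ E₀, ω e = true}
      = Set.pi Set.univ (fun e => if e ∈ E₀ then ({true} : Set Bool) else Set.univ) := by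
    ext ω
    simp only [Set.mem_setOf_eq, Set.mem_pi, Set.mem_univ, forall_true_left]
    constructor
    · intro hω e
      split_ifs with he
      · simpa using hω e he
      · trivial
    · intro hω e he
      have := hω e
      rw [if_pos he] at this
      simpa using this
  rw [RandomCorr.erdosRenyi, hset, MeasureTheory.Measure.pi_pi]
  have hval : ∀ e : Sym2 (Fin s),
      RandomCorr.bern p (if e ∈ E₀ then ({true} : Set Bool) else Set.univ)
        = if e ∈ E₀ then ENNReal.ofReal p else 1 := by
    intro e
    split_ifs with he
    · exact hbt
    · exact measure_univ
  rw [Finset.prod_congr rfl fun e _ => hval e]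
  rw [Finset.prod_ite_mem, Finset.univ_inter, Finset.prod_const]

end AuxLemmas

set_option maxHeartbeats 1000000 in
/-- There is `n₀ > 0` such that for all `n ≥ n₀`, `0 < s ≤ n` and
`0 < p ≤ n^{-13/14}`, the probability that `α(G(s,p)) ≤ min(s/15, log² n)` is at most
`n^{-3s}`. -/
theorem independence_number_of_sparse_random_graph :
    ∃ n₀ : ℕ, 0 < n₀ ∧ ∀ n : ℕ, n₀ ≤ n → ∀ s : ℕ, 0 < s → s ≤ n →
      ∀ p : ℝ, 0 < p → p ≤ (n : ℝ) ^ (-(13 : ℝ)/14) →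
      RandomCorr.erdosRenyi s p
        {ω | (RandomCorr.indepNum (RandomCorr.graphOf ω) : ℝ) ≤
          min ((s : ℝ)/15) ((Real.log n) ^ 2)} ≤
      ENNReal.ofReal ((n : ℝ) ^ (-(3 * s : ℝ))) := by
  classical
  refine ⟨2 ^ 70, by positivity, ?_⟩
  intro n hn s hs hsn p hp hpn
  have hn2 : ((2 : ℝ) ^ (70 : ℕ)) ≤ (n : ℝ) := by exact_mod_cast hn
  have hn1 : (1 : ℝ) ≤ (n : ℝ) := le_trans (by norm_num) hn2
  have hn0 : (0 : ℝ) < (n : ℝ) := lt_of_lt_of_le one_pos hn1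
  have hp1 : p ≤ 1 := hpn.trans (Real.rpow_le_one_of_one_le_of_nonpos hn1 (by norm_num))
  set a : ℝ := min ((s : ℝ)/15) ((Real.log n) ^ 2) with ha
  set k := ⌊a⌋₊ with hk
  by_cases hk0 : k = 0
  · -- the event is empty since the independence number is at least 1
    have hempty : {ω : Sym2 (Fin s) → Bool |
        (RandomCorr.indepNum (RandomCorr.graphOf ω) : ℝ) ≤ a} = ∅ := by
      ext ω
      simp only [Set.mem_setOf_eq, Set.mem_empty_iff_false, iff_false, not_le]
      have h1 : 1 ≤ RandomCorr.indepNum (RandomCorr.graphOf ω) := by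
        apply le_csSup (RandomCorr.indepSet_bddAbove _)
        refine ⟨{⟨0, hs⟩}, Finset.card_singleton _, ?_⟩
        intro x hx y hy
        simp only [Finset.mem_singleton] at hx hy
        subst hx; subst hy
        exact (RandomCorr.graphOf ω).loopless.irrefl _
      have ha1 : a < 1 := Nat.floor_eq_zero.1 hk0
      calc a < 1 := ha1
        _ ≤ _ := by exact_mod_cast h1
    rw [hempty, measure_empty]
    exact zero_le
  -- main case : k ≥ 1
  have hk1 : 1 ≤ k := Nat.one_le_iff_ne_zero.2 hk0
  have ha1 : (1 : ℝ) ≤ a := by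
    have := (Nat.le_floor_iff' one_ne_zero).1 hk1
    exact_mod_cast this
  have hka : (k : ℝ) ≤ a := Nat.floor_le (le_trans zero_le_one ha1)
  have hk15 : 15 * k ≤ s := by
    have h1 : (k : ℝ) ≤ (s : ℝ)/15 := hka.trans (min_le_left _ _)
    have h2 : (15 : ℝ) * (k : ℝ) ≤ (s : ℝ) := by linarith
    exact_mod_cast h2
  have hklog : (k : ℝ) ≤ (Real.log n) ^ 2 := hka.trans (min_le_right _ _)
  have hs15 : 15 ≤ s := by omega
  set m := s * (s - k) / (2 * k) with hm
  have h2k : 0 < 2 * k := by omega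
  have hm7 : 7 * s ≤ m := by
    rw [hm, Nat.le_div_iff_mul_le h2k]
    have h14 : 14 * k ≤ s - k := by omega
    calc 7 * s * (2 * k) = s * (14 * k) := by ring
      _ ≤ s * (s - k) := Nat.mul_le_mul_left _ h14
  have hm0 : 0 < m := by omega
  set N := Fintype.card (Sym2 (Fin s)) with hN
  have hNs : N ≤ s * s := by
    rw [hN, Sym2.card, Fintype.card_fin, Nat.choose_two_right]
    calc (s + 1) * s / 2 ≤ s * 2 * s / 2 := by
          apply Nat.div_le_div_right
          exact Nat.mul_le_mul_right _ (by omega)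
      _ = s * s := by
          rw [show s * 2 * s = 2 * (s * s) by ring, Nat.mul_div_cancel_left _ (by norm_num)]
  -- union bound
  have hsub : {ω : Sym2 (Fin s) → Bool |
        (RandomCorr.indepNum (RandomCorr.graphOf ω) : ℝ) ≤ a}
      ⊆ ⋃ E₀ ∈ Finset.powersetCard m (Finset.univ : Finset (Sym2 (Fin s))),
          {ω : Sym2 (Fin s) → Bool | ∀ e ∈ E₀, ω e = true} := by
    intro ω hω
    simp only [Set.mem_setOf_eq] at hω
    set G := RandomCorr.graphOf ω with hG
    haveI : DecidableRel G.Adj := Classical.decRel _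
    have hind : ∀ S : Finset (Fin s), (∀ x ∈ S, ∀ y ∈ S, ¬ G.Adj x y) → S.card ≤ k := by
      intro S hS
      have hmem : S.card ≤ RandomCorr.indepNum G :=
        le_csSup (RandomCorr.indepSet_bddAbove _) ⟨S, rfl, hS⟩
      have hcast : (S.card : ℝ) ≤ a := le_trans (by exact_mod_cast hmem) hω
      exact Nat.le_floor hcast
    have hpeel := RandomCorr.peel G k hind Finset.univ
    rw [Finset.filter_true_of_mem (fun e _ => fun x _ => Finset.mem_univ x)] at hpeel
    rw [Finset.card_univ, Fintype.card_fin] at hpeel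
    set E := G.edgeFinset.card with hE
    have hprod : s * (s - k) + s * k = s * s := by
      rw [← Nat.mul_add, Nat.sub_add_cancel (by omega)]
    have hx : s * (s - k) ≤ 2 * k * E := by nlinarith [hpeel, hprod]
    have hmE : m ≤ E := by
      rw [hm]
      calc s * (s - k) / (2 * k) ≤ 2 * k * E / (2 * k) := Nat.div_le_div_right hx
        _ = E := Nat.mul_div_cancel_left _ h2k
    obtain ⟨E₀, hE₀sub, hE₀card⟩ := Finset.exists_subset_card_eq hmE
    refine Set.mem_biUnion (Finset.mem_powersetCard.2 ⟨Finset.subset_univ _, hE₀card⟩) ?_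
    intro e he
    have hee : e ∈ G.edgeSet := SimpleGraph.mem_edgeFinset.1 (hE₀sub he)
    revert hee
    refine Sym2.ind (fun x y hxy => ?_) e
    exact hxy.2
  have hstep1 := (measure_mono hsub).trans
    (measure_biUnion_finset_le (μ := RandomCorr.erdosRenyi s p)
      (Finset.powersetCard m (Finset.univ : Finset (Sym2 (Fin s)))) _)
  have hstep2 : ∑ E₀ ∈ Finset.powersetCard m (Finset.univ : Finset (Sym2 (Fin s))),
      RandomCorr.erdosRenyi s p {ω : Sym2 (Fin s) → Bool | ∀ e ∈ E₀, ω e = true}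
      = (N.choose m : ENNReal) * ENNReal.ofReal p ^ m := by
    rw [Finset.sum_congr rfl (fun E₀ hE₀ => ?_)]
    · rw [Finset.sum_const, Finset.card_powersetCard, Finset.card_univ, ← hN, nsmul_eq_mul]
    · rw [RandomCorr.cyl_measure hp.le hp1 E₀,
        (Finset.mem_powersetCard.1 hE₀).2]
  -- now the real-number estimate
  have hmr : (0 : ℝ) < (m : ℝ) := by exact_mod_cast hm0
  have hNr : (0 : ℝ) ≤ (N : ℝ) := Nat.cast_nonneg _
  have hexp0 : (0 : ℝ) < Real.exp 1 := Real.exp_pos 1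
  have e1 : (N.choose m : ℝ) ≤ (Real.exp 1 * N / m) ^ m := by
    have hchoose : (N.choose m : ℝ) ≤ (N : ℝ) ^ m / (m.factorial : ℝ) := by
      exact_mod_cast Nat.choose_le_pow_div m N
    have hfac : (m : ℝ) ^ m ≤ Real.exp 1 ^ m * (m.factorial : ℝ) := by
      have hsum := Real.sum_le_exp_of_nonneg (x := (m : ℝ)) (Nat.cast_nonneg m) (m + 1)
      have hterm : (m : ℝ) ^ m / (m.factorial : ℝ) ≤ Real.exp m := by
        refine le_trans ?_ hsum
        exact Finset.single_le_sum (f := fun i => (m : ℝ) ^ i / (i.factorial : ℝ))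
          (fun i _ => by positivity) (Finset.self_mem_range_succ m)
      rw [div_le_iff₀ (by positivity)] at hterm
      calc (m : ℝ) ^ m ≤ Real.exp m * (m.factorial : ℝ) := hterm
        _ = Real.exp 1 ^ m * (m.factorial : ℝ) := by rw [Real.exp_one_pow]
    refine hchoose.trans ?_
    rw [div_pow, mul_pow, div_le_div_iff₀ (by positivity) (by positivity)]
    calc (N : ℝ) ^ m * (m : ℝ) ^ m ≤ (N : ℝ) ^ m * (Real.exp 1 ^ m * (m.factorial : ℝ)) := by
          exact mul_le_mul_of_nonneg_left hfac (by positivity)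
      _ = Real.exp 1 ^ m * (N : ℝ) ^ m * (m.factorial : ℝ) := by ring
  have e2 : Real.exp 1 * (N : ℝ) ≤ 8 * (k : ℝ) * (m : ℝ) := by
    have hmod := Nat.div_add_mod (s * (s - k)) (2 * k)
    have hlt := Nat.mod_lt (s * (s - k)) h2k
    have hlt2 : s * (s - k) < 2 * k * m + 2 * k := by
      conv_lhs => rw [← hmod]
      rw [← hm]
      exact Nat.add_lt_add_left hlt _
    have hcast : ((s - k : ℕ) : ℝ) = (s : ℝ) - (k : ℝ) := by
      rw [Nat.cast_sub (by omega)]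
    have hlt2r : (s : ℝ) * ((s : ℝ) - (k : ℝ)) < 2 * (k : ℝ) * (m : ℝ) + 2 * (k : ℝ) := by
      rw [← hcast]
      exact_mod_cast hlt2
    have hNr2 : (N : ℝ) ≤ (s : ℝ) * (s : ℝ) := by exact_mod_cast hNs
    have hskr : 15 * (k : ℝ) ≤ (s : ℝ) := by exact_mod_cast hk15
    have hsr : (15 : ℝ) ≤ (s : ℝ) := by exact_mod_cast hs15
    have hkr : (1 : ℝ) ≤ (k : ℝ) := by exact_mod_cast hk1
    have hexp : Real.exp 1 < 2.7182818286 := Real.exp_one_lt_d9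
    have hs0 : (0:ℝ) ≤ (s:ℝ) := Nat.cast_nonneg _
    have hmul : 15 * (k : ℝ) * (s:ℝ) ≤ (s:ℝ) * (s:ℝ) := mul_le_mul_of_nonneg_right hskr hs0
    have hmul2 : 15 * (s:ℝ) ≤ (s:ℝ) * (s:ℝ) := mul_le_mul_of_nonneg_right hsr hs0
    have hA : (k : ℝ) * (s : ℝ) ≤ (s : ℝ) * (s : ℝ) / 15 := by linarith
    have hB : 2 * (k : ℝ) ≤ (s : ℝ) * (s : ℝ) / 15 := by linarith
    have hEN : Real.exp 1 * (N : ℝ) ≤ 2.7182818286 * ((s:ℝ) * (s:ℝ)) := by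
      calc Real.exp 1 * (N : ℝ) ≤ 2.7182818286 * (N : ℝ) :=
            mul_le_mul_of_nonneg_right hexp.le hNr
        _ ≤ 2.7182818286 * ((s:ℝ) * (s:ℝ)) :=
            mul_le_mul_of_nonneg_left hNr2 (by norm_num)
    linarith [hlt2r, hA, hB, hEN]
  have e3 : Real.exp 1 * (N : ℝ) * p / (m : ℝ) ≤ 8 * (k : ℝ) * p := by
    rw [div_le_iff₀ hmr]
    calc Real.exp 1 * (N : ℝ) * p = (Real.exp 1 * (N : ℝ)) * p := by ring
      _ ≤ (8 * (k : ℝ) * (m : ℝ)) * p := mul_le_mul_of_nonneg_right e2 hp.le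
      _ = 8 * (k : ℝ) * p * (m : ℝ) := by ring
  -- bound 8 k p ≤ n^{-1/2}
  have hlogn : Real.log n ≤ 28 * (n : ℝ) ^ ((1 : ℝ)/28) := by
    have hlog := Real.log_le_rpow_div (x := (n : ℝ)) hn0.le (show (0:ℝ) < 1/28 by norm_num)
    have hrw : (n : ℝ) ^ ((1:ℝ)/28) / (1/28) = 28 * (n : ℝ) ^ ((1:ℝ)/28) := by ring
    rw [hrw] at hlog
    exact hlog
  have hlog0 : 0 ≤ Real.log n := Real.log_nonneg hn1
  have e4 : 8 * (k : ℝ) * p ≤ (n : ℝ) ^ (-(1 : ℝ)/2) := by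
    have hkl : (k : ℝ) ≤ (28 * (n : ℝ) ^ ((1 : ℝ)/28)) ^ 2 := by
      refine hklog.trans ?_
      have hpow : (0 : ℝ) ≤ 28 * (n : ℝ) ^ ((1 : ℝ)/28) := by positivity
      nlinarith [hlogn, hlog0]
    have h1 : ((n : ℝ) ^ ((1 : ℝ)/28)) ^ 2 = (n : ℝ) ^ ((1 : ℝ)/14) := by
      rw [← Real.rpow_natCast ((n : ℝ) ^ ((1 : ℝ)/28)) 2, ← Real.rpow_mul hn0.le]
      norm_num
    have hstep : 8 * (k : ℝ) * p ≤ 8 * (28 * (n : ℝ) ^ ((1 : ℝ)/28)) ^ 2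
        * ((n : ℝ) ^ (-(13 : ℝ)/14)) := by
      have hb1 : 8 * (k : ℝ) * p ≤ 8 * (28 * (n : ℝ) ^ ((1 : ℝ)/28)) ^ 2 * p := by
        have := mul_le_mul_of_nonneg_right hkl hp.le
        nlinarith [this]
      refine hb1.trans ?_
      exact mul_le_mul_of_nonneg_left hpn (by positivity)
    have hrw2 : 8 * (28 * (n : ℝ) ^ ((1 : ℝ)/28)) ^ 2 * ((n : ℝ) ^ (-(13 : ℝ)/14))
        = 6272 * (n : ℝ) ^ (-(6 : ℝ)/7) := by
      have h8 : (8 : ℝ) * ((28:ℝ)^2 * (n : ℝ) ^ ((1 : ℝ)/14)) = 6272 * (n : ℝ) ^ ((1 : ℝ)/14) := by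
        ring
      rw [mul_pow, h1, h8, mul_assoc, ← Real.rpow_add hn0]
      norm_num
    rw [hrw2] at hstep
    refine hstep.trans ?_
    have h5 : (6272 : ℝ) ≤ (n : ℝ) ^ ((5 : ℝ)/14) := by
      calc (6272 : ℝ) ≤ 2 ^ (25 : ℕ) := by norm_num
        _ = ((2 : ℝ) ^ (70 : ℕ)) ^ ((5 : ℝ)/14) := by
            rw [← Real.rpow_natCast (2 : ℝ) 70, ← Real.rpow_mul (by norm_num),
              ← Real.rpow_natCast (2 : ℝ) 25]
            norm_num
        _ ≤ (n : ℝ) ^ ((5 : ℝ)/14) :=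
            Real.rpow_le_rpow (by positivity) hn2 (by norm_num)
    calc 6272 * (n : ℝ) ^ (-(6 : ℝ)/7)
        ≤ (n : ℝ) ^ ((5 : ℝ)/14) * (n : ℝ) ^ (-(6 : ℝ)/7) :=
          mul_le_mul_of_nonneg_right h5 (by positivity)
      _ = (n : ℝ) ^ (-(1 : ℝ)/2) := by
          rw [← Real.rpow_add hn0]; norm_num
  have hreal : (N.choose m : ℝ) * p ^ m ≤ (n : ℝ) ^ (-(3 * s : ℝ)) := by
    have e5 : (N.choose m : ℝ) * p ^ m ≤ ((n : ℝ) ^ (-(1 : ℝ)/2)) ^ m := by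
      calc (N.choose m : ℝ) * p ^ m
          ≤ (Real.exp 1 * N / m) ^ m * p ^ m :=
            mul_le_mul_of_nonneg_right e1 (pow_nonneg hp.le m)
        _ = (Real.exp 1 * (N : ℝ) * p / (m : ℝ)) ^ m := by
            rw [← mul_pow]; congr 1; field_simp
        _ ≤ (8 * (k : ℝ) * p) ^ m := by
            apply pow_le_pow_left₀ (by positivity) e3
        _ ≤ ((n : ℝ) ^ (-(1 : ℝ)/2)) ^ m := by
            apply pow_le_pow_left₀ (by positivity) e4
    refine e5.trans ?_
    rw [← Real.rpow_natCast ((n : ℝ) ^ (-(1 : ℝ)/2)) m, ← Real.rpow_mul hn0.le]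
    apply Real.rpow_le_rpow_of_exponent_le hn1
    have hmr7 : (7 : ℝ) * (s : ℝ) ≤ (m : ℝ) := by exact_mod_cast hm7
    nlinarith [hmr7, Nat.cast_nonneg (α := ℝ) s]
  refine hstep1.trans ?_
  rw [hstep2]
  calc (N.choose m : ENNReal) * ENNReal.ofReal p ^ m
      = ENNReal.ofReal ((N.choose m : ℝ) * p ^ m) := by
        rw [ENNReal.ofReal_mul (by positivity), ← ENNReal.ofReal_pow hp.le,
          ENNReal.ofReal_natCast]
    _ ≤ ENNReal.ofReal ((n : ℝ) ^ (-(3 * s : ℝ))) := ENNReal.ofReal_le_ofReal hreal
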